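/- Let K be a field in which every element has a square root, let I be a finite type, let σ : I → I be an involution, and let f : I → Kˣ be any function into the units of K. Then there exist functions α, γ : I → Kˣ such that for every i ∈ I: (α(i)·α(σ i))²·f(i)·f(σ i) = 1, γ(i) = (α(i)·α(σ i)·f(i))⁻¹, and γ(i)·γ(σ i) = 1. -/

import Mathlib

/-- Given any `f : I → Kˣ` over a field `K` with square roots and an involution `σ` of a finite
label set `I`, there are rescaling factors `α` and gluing discrepancies `γ` with
`(α i · α (σ i))² · f i · f (σ i) = 1`, `γ i = (α i · α (σ i) · f i)⁻¹` and `γ i · γ (σ i) = 1`. -/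
theorem exists_quasi_isomorphism_scaling (K : Type*) [Field K]
    (hsq : ∀ x : K, ∃ y : K, y * y = x)
    (I : Type*) [Fintype I] (σ : I → I) (hσ : Function.Involutive σ) (f : I → Kˣ) :
    ∃ α γ : I → Kˣ, ∀ i : I,
      (α i * α (σ i)) ^ 2 * f i * f (σ i) = 1 ∧
      γ i = (α i * α (σ i) * f i)⁻¹ ∧
      γ i * γ (σ i) = 1 := by
  choose y hy using fun i => hsq (((f i)⁻¹ : Kˣ) : K)
  have hy0 : ∀ i, y i ≠ 0 := by
    intro i h
    have := hy i
    rw [h, zero_mul] at this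
    exact (f i)⁻¹.ne_zero this.symm
  set α : I → Kˣ := fun i => Units.mk0 (y i) (hy0 i) with hα
  have key : ∀ i : I, (α i * α (σ i)) ^ 2 * f i * f (σ i) = 1 := by
    intro i
    ext
    push_cast [hα]
    have h1 := hy i
    have h2 := hy (σ i)
    field_simp
    ring_nf
    rw [sq, sq, Units.val_mk0, Units.val_mk0, h1, h2, Units.val_inv_eq_inv_val, Units.val_inv_eq_inv_val]
    field_simp
  refine ⟨α, fun i => (α i * α (σ i) * f i)⁻¹, fun i => ⟨key i, rfl, ?_⟩⟩
  show (α i * α (σ i) * f i)⁻¹ * (α (σ i) * α (σ (σ i)) * f (σ i))⁻¹ = 1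
  rw [hσ i, ← mul_inv, inv_eq_one, ← key i]
  ext
  push_cast
  ring
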